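/- For the block triangular matrices 𝒜 = [[A, BC_v],[0, A_v]] and 𝒜̂ = [[A_k, B_kC_v],[0, A_v]] with ℬ = [0; B_v] and ℬ̂ = [0; B_v], the (1,1) block 𝒫_{12,ω} of the solution of 𝒜X + X𝒜̂ᵀ + ℬℬ̂ᵀ = 0 satisfies A𝒫_{12,ω} + 𝒫_{12,ω}A_kᵀ + P̂_vC_vᵀB_kᵀ + BC_vP̂_{k,v}ᵀ = 0, where P̂_v solves AP̂_v + P̂_vA_vᵀ + BC_vP_v = 0, P̂_{k,v} solves A_kP̂_{k,v} + P̂_{k,v}A_vᵀ + B_kC_vP_v = 0, and P_v solves A_vP_v + P_vA_vᵀ + B_vB_vᵀ = 0. -/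

import Mathlib

open Matrix

/-- A real matrix is Hurwitz if all its (complex) eigenvalues have negative real part. -/
def IsHurwitzR {n : ℕ} (A : Matrix (Fin n) (Fin n) ℝ) : Prop :=
  ∀ μ ∈ spectrum ℂ (A.map Complex.ofReal), μ.re < 0

/-- The padded input matrix `[0; B_v]`. -/
def padBot {n q m : ℕ} (Bv : Matrix (Fin q) (Fin m) ℝ) : Matrix (Fin n ⊕ Fin q) (Fin m) ℝ :=
  Matrix.of (Sum.elim (fun _ => (0 : Fin m → ℝ)) (fun i => Bv i))

open Polynomial

attribute [local instance] Matrix.linftyOpNormedRing Matrix.linftyOpNormedAlgebra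

lemma charpoly_eval_eq {N : ℕ} (M : Matrix (Fin N) (Fin N) ℂ) (μ : ℂ) :
    M.charpoly.eval μ = (algebraMap ℂ (Matrix (Fin N) (Fin N) ℂ) μ - M).det := by
  rw [Matrix.charpoly, eval_det, matPolyEquiv_charmatrix]
  simp [Matrix.scalar, algebraMap_eq_diagonal]

lemma mem_spectrum_of_root {N : ℕ} (M : Matrix (Fin N) (Fin N) ℂ) {μ : ℂ}
    (h : M.charpoly.eval μ = 0) : μ ∈ spectrum ℂ M := by
  rw [spectrum.mem_iff]
  intro hu
  rw [charpoly_eval_eq] at h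
  exact (isUnit_iff_ne_zero.mp ((Matrix.isUnit_iff_isUnit_det _).mp hu)) h

lemma aeval_isUnit {b : ℕ} (hb : 0 < b) (N : Matrix (Fin b) (Fin b) ℂ) (p : ℂ[X])
    (h : ∀ μ ∈ spectrum ℂ N, p.eval μ ≠ 0) : IsUnit (aeval N p) := by
  haveI : Nonempty (Fin b) := ⟨⟨0, hb⟩⟩
  haveI : Nontrivial (Matrix (Fin b) (Fin b) ℂ) := inferInstance
  rw [← spectrum.zero_notMem_iff ℂ, spectrum.map_polynomial_aeval N p]
  rintro ⟨μ, hμ, h0⟩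
  exact h μ hμ h0

lemma intertwine_aeval {a b : ℕ} (M : Matrix (Fin a) (Fin a) ℂ) (N : Matrix (Fin b) (Fin b) ℂ)
    (Y : Matrix (Fin a) (Fin b) ℂ) (h : M * Y = Y * N) (p : ℂ[X]) :
    (aeval M p) * Y = Y * (aeval N p) := by
  have hp : ∀ j : ℕ, M ^ j * Y = Y * N ^ j := by
    intro j
    induction j with
    | zero => simp
    | succ j ih =>
      rw [pow_succ', pow_succ', Matrix.mul_assoc, ih, ← Matrix.mul_assoc, h, Matrix.mul_assoc]
  induction p using Polynomial.induction_on' with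
  | add p q hq hr => rw [map_add, map_add, Matrix.add_mul, Matrix.mul_add, hq, hr]
  | monomial j c =>
    simp [aeval_monomial, Algebra.algebraMap_eq_smul_one, smul_mul_assoc, mul_smul_comm, hp j]

lemma spectrum_neg_transpose {b : ℕ} (N : Matrix (Fin b) (Fin b) ℂ) {μ : ℂ}
    (h : μ ∈ spectrum ℂ (-Nᵀ)) : -μ ∈ spectrum ℂ N := by
  rw [spectrum.mem_iff] at h ⊢
  intro hu
  apply h
  have h2 : IsUnit ((algebraMap ℂ (Matrix (Fin b) (Fin b) ℂ) (-μ) - N)ᵀ) := by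
    rw [Matrix.isUnit_iff_isUnit_det, Matrix.det_transpose, ← Matrix.isUnit_iff_isUnit_det]
    exact hu
  have h3 : (algebraMap ℂ (Matrix (Fin b) (Fin b) ℂ) (-μ) - N)ᵀ
      = -(algebraMap ℂ (Matrix (Fin b) (Fin b) ℂ) μ - (-Nᵀ)) := by
    ext i j
    simp [Matrix.algebraMap_eq_diagonal, Matrix.diagonal_apply, Matrix.transpose_apply]
    by_cases hij : i = j
    · simp [hij]; ring
    · simp [hij, eq_comm]
  rw [h3] at h2
  simpa using h2.neg

lemma sylvester_eq_zero {a b : ℕ} (M : Matrix (Fin a) (Fin a) ℝ) (Nm : Matrix (Fin b) (Fin b) ℝ)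
    (hM : IsHurwitzR M) (hN : IsHurwitzR Nm) (Y : Matrix (Fin a) (Fin b) ℝ)
    (h : M * Y + Y * Nmᵀ = 0) : Y = 0 := by
  rcases Nat.eq_zero_or_pos b with hb | hb
  · subst hb; ext i j; exact j.elim0
  · set Mc := M.map Complex.ofReal with hMc
    set Nc : Matrix (Fin b) (Fin b) ℂ := -(Nm.map Complex.ofReal)ᵀ with hNc
    set Yc := Y.map Complex.ofReal with hYc
    have hmul : Mc * Yc = Yc * Nc := by
      have h' := congrArg (fun Z : Matrix (Fin a) (Fin b) ℝ =>
        Z.map (Complex.ofRealHom : ℝ →+* ℂ)) h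
      rw [Matrix.map_add _ (fun x y => map_add Complex.ofRealHom x y),
        Matrix.map_mul, Matrix.map_mul,
        Matrix.map_zero _ (map_zero Complex.ofRealHom)] at h'
      have h'' : Mc * Yc + Yc * (Nmᵀ.map Complex.ofReal) = 0 := h'
      rw [hNc, Matrix.mul_neg, ← Matrix.transpose_map, eq_neg_iff_add_eq_zero]
      exact h''
    set p := Mc.charpoly with hp
    have h1 : Yc * (Polynomial.aeval Nc p) = 0 := by
      rw [← intertwine_aeval Mc Nc Yc hmul p, hp, Matrix.aeval_self_charpoly, Matrix.zero_mul]
    have hunit : IsUnit (Polynomial.aeval Nc p) := by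
      apply aeval_isUnit hb
      intro μ hμ hev
      have h2 : μ ∈ spectrum ℂ Mc := mem_spectrum_of_root Mc hev
      have h3 : μ.re < 0 := hM μ h2
      have h4 : -μ ∈ spectrum ℂ (Nm.map Complex.ofReal) := spectrum_neg_transpose _ hμ
      have h5 : (-μ).re < 0 := hN _ h4
      simp at h5
      linarith
    have hY0 : Yc = 0 := by
      obtain ⟨u, hu⟩ := hunit
      have h6 : Yc * u.val = 0 := by rw [hu]; exact h1
      calc Yc = Yc * (u.val * (u⁻¹).val) := by rw [Units.mul_inv, Matrix.mul_one]
        _ = (Yc * u.val) * (u⁻¹).val := by rw [Matrix.mul_assoc]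
        _ = 0 := by rw [h6, Matrix.zero_mul]
    ext i j
    have h7 := congrFun (congrFun hY0 i) j
    have h8 : ((Y i j : ℝ) : ℂ) = 0 := h7
    exact_mod_cast h8

lemma sylvester_unique {a b : ℕ} (M : Matrix (Fin a) (Fin a) ℝ) (Nm : Matrix (Fin b) (Fin b) ℝ)
    (hM : IsHurwitzR M) (hN : IsHurwitzR Nm) (Cst P Q : Matrix (Fin a) (Fin b) ℝ)
    (hP : M * P + P * Nmᵀ + Cst = 0) (hQ : M * Q + Q * Nmᵀ + Cst = 0) : P = Q := by
  have e : (M * P + P * Nmᵀ + Cst) - (M * Q + Q * Nmᵀ + Cst) = 0 := by rw [hP, hQ, sub_zero]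
  have h0 : M * (P - Q) + (P - Q) * Nmᵀ = 0 := by
    rw [Matrix.mul_sub, Matrix.sub_mul]
    abel_nf at e ⊢
    exact e
  have := sylvester_eq_zero M Nm hM hN (P - Q) h0
  exact sub_eq_zero.mp this

lemma padBot_mul_padBot_transpose {n k q m : ℕ} (Bv : Matrix (Fin q) (Fin m) ℝ) :
    (padBot Bv : Matrix (Fin n ⊕ Fin q) (Fin m) ℝ)
      * (padBot Bv : Matrix (Fin k ⊕ Fin q) (Fin m) ℝ)ᵀ
    = Matrix.fromBlocks 0 0 0 (Bv * Bvᵀ) := by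
  ext i j
  cases i <;> cases j <;>
    simp [padBot, Matrix.mul_apply, Matrix.fromBlocks, Matrix.transpose_apply]

/-- for the block triangular matrices `𝒜 = [[A, BC_v],[0, A_v]]`,
`𝒜̂ = [[A_k, B_kC_v],[0, A_v]]` and `ℬ = ℬ̂ = [0; B_v]`, the (1,1) block `𝒫₁₂ω` of the
solution of `𝒜X + X𝒜̂ᵀ + ℬℬ̂ᵀ = 0` satisfies
`A 𝒫₁₂ω + 𝒫₁₂ω A_kᵀ + P̂_v C_vᵀ B_kᵀ + B C_v P̂_{k,v}ᵀ = 0`. -/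
theorem filter_realization_cross_gramian
    {n k q m : ℕ}
    (A : Matrix (Fin n) (Fin n) ℝ) (Ak : Matrix (Fin k) (Fin k) ℝ)
    (Av : Matrix (Fin q) (Fin q) ℝ)
    (B : Matrix (Fin n) (Fin m) ℝ) (Bk : Matrix (Fin k) (Fin m) ℝ)
    (Bv : Matrix (Fin q) (Fin m) ℝ) (Cv : Matrix (Fin m) (Fin q) ℝ)
    (hA : IsHurwitzR A) (hAk : IsHurwitzR Ak) (hAv : IsHurwitzR Av)
    (Pv : Matrix (Fin q) (Fin q) ℝ)
    (hPv : Av * Pv + Pv * Avᵀ + Bv * Bvᵀ = 0)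
    (Phv : Matrix (Fin n) (Fin q) ℝ)
    (hPhv : A * Phv + Phv * Avᵀ + B * Cv * Pv = 0)
    (Phkv : Matrix (Fin k) (Fin q) ℝ)
    (hPhkv : Ak * Phkv + Phkv * Avᵀ + Bk * Cv * Pv = 0)
    (X : Matrix (Fin n ⊕ Fin q) (Fin k ⊕ Fin q) ℝ)
    (hX : Matrix.fromBlocks A (B * Cv) 0 Av * X
        + X * (Matrix.fromBlocks Ak (Bk * Cv) 0 Av)ᵀ
        + padBot Bv * (padBot Bv : Matrix (Fin k ⊕ Fin q) (Fin m) ℝ)ᵀ = 0) :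
    A * X.toBlocks₁₁ + X.toBlocks₁₁ * Akᵀ + Phv * Cvᵀ * Bkᵀ + B * Cv * Phkvᵀ = 0 := by
  rw [← Matrix.fromBlocks_toBlocks X, Matrix.fromBlocks_transpose,
    Matrix.fromBlocks_multiply, Matrix.fromBlocks_multiply,
    padBot_mul_padBot_transpose, Matrix.fromBlocks_add, Matrix.fromBlocks_add,
    ← Matrix.fromBlocks_zero, Matrix.fromBlocks_inj] at hX
  obtain ⟨e11, e12, e21, e22⟩ := hX
  simp only [Matrix.zero_mul, Matrix.mul_zero, Matrix.transpose_zero, add_zero, zero_add]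
    at e11 e12 e21 e22
  -- Pv is symmetric
  have hPvT : Av * Pvᵀ + Pvᵀ * Avᵀ + Bv * Bvᵀ = 0 := by
    have h' := congrArg Matrix.transpose hPv
    simp only [Matrix.transpose_add, Matrix.transpose_mul, Matrix.transpose_transpose,
      Matrix.transpose_zero] at h'
    rw [add_comm (Pvᵀ * Avᵀ) (Av * Pvᵀ)] at h'
    exact h'
  have hPvsymm : Pvᵀ = Pv := sylvester_unique Av Av hAv hAv (Bv * Bvᵀ) Pvᵀ Pv hPvT hPv
  -- X₂₂ = Pv
  have hX22 : X.toBlocks₂₂ = Pv := by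
    refine sylvester_unique Av Av hAv hAv (Bv * Bvᵀ) _ Pv ?_ hPv
    exact e22
  -- X₁₂ = Phv
  have hX12 : X.toBlocks₁₂ = Phv := by
    refine sylvester_unique A Av hA hAv (B * Cv * Pv) _ Phv ?_ hPhv
    rw [hX22] at e12
    rw [add_assoc, add_comm (B * Cv * Pv), ← add_assoc] at e12
    exact e12
  -- X₂₁ᵀ = Phkv
  have hX21 : X.toBlocks₂₁ᵀ = Phkv := by
    refine sylvester_unique Ak Av hAk hAv (Bk * Cv * Pv) _ Phkv ?_ hPhkv
    have h' := congrArg Matrix.transpose e21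
    simp only [Matrix.transpose_add, Matrix.transpose_mul, Matrix.transpose_transpose,
      Matrix.transpose_zero] at h'
    rw [hX22, hPvsymm] at h'
    rw [← add_assoc, add_comm (X.toBlocks₂₁ᵀ * Avᵀ) (Ak * X.toBlocks₂₁ᵀ)] at h'
    exact h'
  -- conclude from e11
  have hX21' : X.toBlocks₂₁ = Phkvᵀ := by rw [← hX21, Matrix.transpose_transpose]
  rw [hX12, hX21'] at e11
  rw [Matrix.transpose_mul, ← Matrix.mul_assoc] at e11
  rw [show A * X.toBlocks₁₁ + B * Cv * Phkvᵀ + (X.toBlocks₁₁ * Akᵀ + Phv * Cvᵀ * Bkᵀ)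
      = A * X.toBlocks₁₁ + X.toBlocks₁₁ * Akᵀ + Phv * Cvᵀ * Bkᵀ + B * Cv * Phkvᵀ by abel] at e11
  exact e11
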